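/- Let A ∈ ℝ^{m×n}, b ∈ ℝᵐ, and T, R satisfy T + RA = I, range(R) ⊆ range(Aᵀ), and ‖T̃‖ < 1 with T̃ := T P_{range(Aᵀ)}. Define Q(x) = Tx + Rb and Δ := (I − T̃)⁻¹ R P_{null(Aᵀ)}(b). Then Fix(Q) = {x + Δ : x ∈ LSS(A;b)}, where LSS(A;b) is the set of least squares solutions of Ax = b. -/

import Mathlib

open Matrix RealInnerProductSpace

set_option maxHeartbeats 2000000

/-- The continuous linear map on Euclidean spaces induced by a matrix. -/
noncomputable def mulE {m n : ℕ} (A : Matrix (Fin m) (Fin n) ℝ) :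
    EuclideanSpace ℝ (Fin n) →L[ℝ] EuclideanSpace ℝ (Fin m) :=
  LinearMap.toContinuousLinearMap (Matrix.toEuclideanLin A)

/-- The orthogonal projection of the ambient space onto a subspace, as a map of the
ambient space. -/
noncomputable def projCLM {n : ℕ} (V : Submodule ℝ (EuclideanSpace ℝ (Fin n))) :
    EuclideanSpace ℝ (Fin n) →L[ℝ] EuclideanSpace ℝ (Fin n) :=
  V.subtypeL.comp (V.orthogonalProjectionOnto)

section Aux

variable {m n p : ℕ}

lemma mulE_apply (M : Matrix (Fin m) (Fin n) ℝ) (v : EuclideanSpace ℝ (Fin n)) :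
    mulE M v = Matrix.toEuclideanLin M v := rfl

lemma mulE_mul (M : Matrix (Fin m) (Fin n) ℝ) (N : Matrix (Fin n) (Fin p) ℝ)
    (v : EuclideanSpace ℝ (Fin p)) :
    mulE (M * N) v = mulE M (mulE N v) := by
  simp [mulE_apply, Matrix.toEuclideanLin_apply, Matrix.mulVec_mulVec]

lemma mulE_add (M N : Matrix (Fin m) (Fin n) ℝ) (v : EuclideanSpace ℝ (Fin n)) :
    mulE (M + N) v = mulE M v + mulE N v := by
  simp [mulE_apply, map_add]

lemma mulE_one (v : EuclideanSpace ℝ (Fin n)) :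
    mulE (1 : Matrix (Fin n) (Fin n) ℝ) v = v := by
  simp [mulE_apply, Matrix.toEuclideanLin_apply, Matrix.one_mulVec]

/-- `ker (Aᵀ) = (range A)ᗮ` for Euclidean linear maps of real matrices. -/
lemma ker_transpose_eq (M : Matrix (Fin m) (Fin n) ℝ) :
    LinearMap.ker (Matrix.toEuclideanLin Mᵀ)
      = (LinearMap.range (Matrix.toEuclideanLin M))ᗮ := by
  have hadj : Matrix.toEuclideanLin Mᵀ = LinearMap.adjoint (Matrix.toEuclideanLin M) := by
    rw [← Matrix.conjTranspose_eq_transpose_of_trivial]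
    exact Matrix.toEuclideanLin_conjTranspose_eq_adjoint M
  ext y
  rw [LinearMap.mem_ker, hadj, Submodule.mem_orthogonal]
  constructor
  · intro h u hu
    obtain ⟨x, rfl⟩ := hu
    rw [← LinearMap.adjoint_inner_right, h, inner_zero_right]
  · intro h
    have h0 : (inner ℝ (LinearMap.adjoint (Matrix.toEuclideanLin M) y)
        (LinearMap.adjoint (Matrix.toEuclideanLin M) y) : ℝ) = 0 := by
      rw [LinearMap.adjoint_inner_left, real_inner_comm]
      exact h _ ⟨_, rfl⟩
    exact inner_self_eq_zero.mp h0

lemma projCLM_mem (V : Submodule ℝ (EuclideanSpace ℝ (Fin n))) (x : EuclideanSpace ℝ (Fin n)) :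
    projCLM V x ∈ V := (V.orthogonalProjectionOnto x).2

lemma projCLM_eq_self (V : Submodule ℝ (EuclideanSpace ℝ (Fin n)))
    {x : EuclideanSpace ℝ (Fin n)} (hx : x ∈ V) : projCLM V x = x := by
  have : V.orthogonalProjectionOnto ((⟨x, hx⟩ : V) : EuclideanSpace ℝ (Fin n)) = ⟨x, hx⟩ :=
    Submodule.orthogonalProjectionOnto_mem_subspace_eq_self (⟨x, hx⟩ : V)
  simpa [projCLM] using congrArg (Subtype.val) this

lemma sub_projCLM_mem_orthogonal (V : Submodule ℝ (EuclideanSpace ℝ (Fin n)))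
    (x : EuclideanSpace ℝ (Fin n)) : x - projCLM V x ∈ Vᗮ :=
  Submodule.sub_starProjection_mem_orthogonal (K := V) x

lemma norm_projCLM_le (V : Submodule ℝ (EuclideanSpace ℝ (Fin n)))
    (x : EuclideanSpace ℝ (Fin n)) : ‖projCLM V x‖ ≤ ‖x‖ := by
  have h1 : ‖projCLM V x‖ = ‖V.orthogonalProjectionOnto x‖ := rfl
  calc ‖projCLM V x‖ = ‖V.orthogonalProjectionOnto x‖ := h1
    _ ≤ ‖(V.orthogonalProjectionOnto : EuclideanSpace ℝ (Fin n) →L[ℝ] V)‖ * ‖x‖ :=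
        (V.orthogonalProjectionOnto).le_opNorm x
    _ ≤ 1 * ‖x‖ := by
        exact mul_le_mul_of_nonneg_right (Submodule.orthogonalProjectionOnto_norm_le V) (norm_nonneg x)
    _ = ‖x‖ := one_mul _

lemma projCLM_idem (V : Submodule ℝ (EuclideanSpace ℝ (Fin n)))
    (x : EuclideanSpace ℝ (Fin n)) : projCLM V (projCLM V x) = projCLM V x :=
  projCLM_eq_self V (projCLM_mem V x)

/-- Pythagoras for distances to a subspace. -/
lemma dist_sq_eq (K : Submodule ℝ (EuclideanSpace ℝ (Fin m)))
    (b u : EuclideanSpace ℝ (Fin m)) (hu : u ∈ K) :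
    ‖u - b‖ ^ 2 = ‖u - projCLM K b‖ ^ 2 + ‖projCLM K b - b‖ ^ 2 := by
  have horth : (inner ℝ (u - projCLM K b) (projCLM K b - b) : ℝ) = 0 := by
    have h1 : b - projCLM K b ∈ Kᗮ := sub_projCLM_mem_orthogonal K b
    have h2 : u - projCLM K b ∈ K := Submodule.sub_mem K hu (projCLM_mem K b)
    have := h1 (u - projCLM K b) h2
    rw [← neg_sub b (projCLM K b), inner_neg_right, this, neg_zero]
  have hdecomp : u - b = (u - projCLM K b) + (projCLM K b - b) := by abel
  rw [hdecomp, norm_add_sq_real, horth]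
  ring

end Aux

/-- Under `T + RA = I`, `range R ⊆ range Aᵀ`, `‖T̃‖ < 1` with `T̃ = T P_{range Aᵀ}`, the
fixed point set of `Q(x) = Tx + Rb` equals `{x + Δ : x ∈ LSS(A;b)}`, where
`Δ = (I − T̃)⁻¹ R P_{null Aᵀ}(b)` and `LSS(A;b)` is the set of least squares solutions. -/
theorem fixQ_eq_LSS_translate (m n : ℕ)
    (A : Matrix (Fin m) (Fin n) ℝ) (b : EuclideanSpace ℝ (Fin m))
    (T : Matrix (Fin n) (Fin n) ℝ)
    (R : Matrix (Fin n) (Fin m) ℝ)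
    (h1 : T + R * A = 1)
    (h2 : ∀ y : EuclideanSpace ℝ (Fin m),
      mulE R y ∈ LinearMap.range (Matrix.toEuclideanLin Aᵀ))
    (Ttil : EuclideanSpace ℝ (Fin n) →L[ℝ] EuclideanSpace ℝ (Fin n))
    (hTtil : Ttil = (mulE T).comp (projCLM (LinearMap.range (Matrix.toEuclideanLin Aᵀ))))
    (h3 : ‖Ttil‖ < 1)
    (LSS : Set (EuclideanSpace ℝ (Fin n)))
    (hLSS : LSS = {x | ∀ z, ‖mulE A x - b‖ ≤ ‖mulE A z - b‖})
    (Δ : EuclideanSpace ℝ (Fin n))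
    (hΔ : Δ = Ring.inverse (1 - Ttil)
      (mulE R (projCLM (LinearMap.ker (Matrix.toEuclideanLin Aᵀ)) b))) :
    {x | mulE T x + mulE R b = x} = (fun x => x + Δ) '' LSS := by
  classical
  set V : Submodule ℝ (EuclideanSpace ℝ (Fin n)) :=
    LinearMap.range (Matrix.toEuclideanLin Aᵀ) with hV
  set N : Submodule ℝ (EuclideanSpace ℝ (Fin m)) :=
    LinearMap.ker (Matrix.toEuclideanLin Aᵀ) with hNdef
  set K : Submodule ℝ (EuclideanSpace ℝ (Fin m)) :=
    LinearMap.range (Matrix.toEuclideanLin A) with hK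
  have hN : N = Kᗮ := ker_transpose_eq A
  have hVperp : Vᗮ = LinearMap.ker (Matrix.toEuclideanLin A) := by
    have := (ker_transpose_eq Aᵀ).symm
    rwa [Matrix.transpose_transpose] at this
  -- basic consequence of h1
  have hTR : ∀ x, mulE T x + mulE R (mulE A x) = x := by
    intro x
    have := congrArg (fun M => mulE M x) h1
    simpa [mulE_add, mulE_mul, mulE_one] using this
  -- membership facts
  have hmemK : ∀ x, mulE A x ∈ K := fun x => ⟨x, rfl⟩
  have hmemV : ∀ y, mulE R y ∈ V := h2
  set Pb : EuclideanSpace ℝ (Fin m) := projCLM K b with hPb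
  set PNb : EuclideanSpace ℝ (Fin m) := projCLM N b with hPNb
  -- b = Pb + PNb
  have hbsplit : Pb + PNb = b := by
    have h1' : PNb = b - Pb := by
      have := congrArg (Subtype.val) (Submodule.orthogonalProjectionOnto_orthogonal (K := K) b)
      rw [hPNb, hN]
      exact this
    rw [h1']; abel
  set w : EuclideanSpace ℝ (Fin n) := mulE R PNb with hw
  -- (1 - Ttil) Δ = w
  have hInv : Δ - Ttil Δ = w := by
    have hu : IsUnit ((1 : EuclideanSpace ℝ (Fin n) →L[ℝ] EuclideanSpace ℝ (Fin n)) - Ttil) :=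
      ⟨Units.oneSub Ttil h3, rfl⟩
    have hcan : ((1 : EuclideanSpace ℝ (Fin n) →L[ℝ] EuclideanSpace ℝ (Fin n)) - Ttil)
        * Ring.inverse (1 - Ttil) = 1 := Ring.mul_inverse_cancel _ hu
    have := congrArg (fun (f : EuclideanSpace ℝ (Fin n) →L[ℝ] EuclideanSpace ℝ (Fin n)) => f w)
      hcan
    simp only [ContinuousLinearMap.mul_apply, ContinuousLinearMap.one_apply] at this
    calc Δ - Ttil Δ = ((1 : EuclideanSpace ℝ (Fin n) →L[ℝ] EuclideanSpace ℝ (Fin n)) - Ttil) Δ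
        := by simp [ContinuousLinearMap.sub_apply]
      _ = w := by rw [hΔ]; exact this
  -- Δ ∈ V
  have hΔV : Δ ∈ V := by
    have hΔeq : Δ = w + Ttil Δ := by
      rw [← hInv]; abel
    have hT : Ttil Δ = projCLM V Δ - mulE R (mulE A (projCLM V Δ)) := by
      rw [hTtil]
      exact eq_sub_of_add_eq (hTR _)
    rw [hΔeq, hT]
    exact Submodule.add_mem V (hmemV _)
      (Submodule.sub_mem V (projCLM_mem V Δ) (hmemV _))
  -- R A Δ = w
  have hRAΔ : mulE R (mulE A Δ) = w := by
    have h4 := hTR Δ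
    have h5 : Ttil Δ = mulE T Δ := by
      rw [hTtil]
      simp only [ContinuousLinearMap.comp_apply, projCLM_eq_self V hΔV]
    calc mulE R (mulE A Δ) = Δ - mulE T Δ := eq_sub_of_add_eq' h4
      _ = Δ - Ttil Δ := by rw [h5]
      _ = w := hInv
  -- LSS characterization
  have lss_iff : ∀ x, x ∈ LSS ↔ mulE A x = Pb := by
    intro x
    rw [hLSS]
    constructor
    · intro hx
      obtain ⟨z₀, hz₀⟩ : Pb ∈ K := projCLM_mem K b
      have hz₀' : mulE A z₀ = Pb := hz₀
      have hle : ‖mulE A x - b‖ ≤ ‖Pb - b‖ := by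
        have := hx z₀
        rwa [hz₀'] at this
      have hpyth := dist_sq_eq K b (mulE A x) (hmemK x)
      have h0 : ‖mulE A x - Pb‖ = 0 := by
        nlinarith [norm_nonneg (mulE A x - Pb), norm_nonneg (mulE A x - b), norm_nonneg (Pb - b)]
      have := norm_eq_zero.mp h0
      exact sub_eq_zero.mp this
    · intro hx z
      have hpyth := dist_sq_eq K b (mulE A z) (hmemK z)
      have hx' : ‖mulE A x - b‖ = ‖Pb - b‖ := by rw [hx]
      rw [hx']
      nlinarith [norm_nonneg (mulE A z - Pb), norm_nonneg (mulE A z - b), norm_nonneg (Pb - b)]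
  -- now the set equality
  ext y
  simp only [Set.mem_setOf_eq, Set.mem_image]
  constructor
  · -- fixed point ⊆ LSS + Δ
    intro hy
    refine ⟨y - Δ, ?_, by abel⟩
    -- from fixed point: R A y = R b
    have hRy : mulE R (mulE A y) = mulE R b := by
      have h' : mulE T y + mulE R (mulE A y) = mulE T y + mulE R b := by
        rw [hTR y, hy]
      exact add_left_cancel h'
    -- u := A y - A Δ - Pb
    set u : EuclideanSpace ℝ (Fin m) := mulE A y - mulE A Δ - Pb with hu
    have huK : u ∈ K := Submodule.sub_mem K
      (Submodule.sub_mem K (hmemK y) (hmemK Δ)) (projCLM_mem K b)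
    have hRu : mulE R u = 0 := by
      have : mulE R u = mulE R (mulE A y) - mulE R (mulE A Δ) - mulE R Pb := by
        rw [hu]; simp [map_sub]
      rw [this, hRy, hRAΔ]
      have : mulE R b = mulE R Pb + w := by
        rw [hw, ← map_add, hbsplit]
      rw [this]; abel
    obtain ⟨v, hv⟩ := huK
    have hv' : mulE A v = u := hv
    -- T v = v
    have hTv : mulE T v = v := by
      have := hTR v
      rw [hv', hRu, add_zero] at this
      exact this
    -- projection of v onto V vanishes
    have hPV : projCLM V v = 0 := by
      have hq : v - projCLM V v ∈ Vᗮ := sub_projCLM_mem_orthogonal V v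
      have hAq : mulE A (v - projCLM V v) = 0 := by
        rw [hVperp] at hq
        exact hq
      have hTq : mulE T (v - projCLM V v) = v - projCLM V v := by
        have := hTR (v - projCLM V v)
        rwa [hAq, map_zero, add_zero] at this
      have hsplit : mulE T v = Ttil v + (v - projCLM V v) := by
        have : mulE T v = mulE T (projCLM V v) + mulE T (v - projCLM V v) := by
          rw [← map_add]; congr 1; abel
        rw [this, hTq, hTtil]; rfl
      have hPVeq : projCLM V v = projCLM V (Ttil (projCLM V v)) := by
        have h6 : v = Ttil v + (v - projCLM V v) := by rw [← hsplit, hTv]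
        have h7 : projCLM V v = projCLM V (Ttil v) + projCLM V (v - projCLM V v) := by
          conv_lhs => rw [h6]
          rw [map_add]
        have h8 : projCLM V (v - projCLM V v) = 0 := by
          show V.subtypeL (V.orthogonalProjectionOnto (v - projCLM V v)) = 0
          rw [Submodule.orthogonalProjectionOnto_apply_of_mem_orthogonal hq, map_zero]
        have h9 : Ttil v = Ttil (projCLM V v) := by
          rw [hTtil]
          simp only [ContinuousLinearMap.comp_apply, projCLM_idem]
        calc projCLM V v = projCLM V (Ttil v) + projCLM V (v - projCLM V v) := h7
          _ = projCLM V (Ttil v) := by rw [h8, add_zero]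
          _ = projCLM V (Ttil (projCLM V v)) := congrArg _ h9
      have hnorm : ‖projCLM V v‖ ≤ ‖Ttil‖ * ‖projCLM V v‖ := by
        calc ‖projCLM V v‖ = ‖projCLM V (Ttil (projCLM V v))‖ := by rw [← hPVeq]
          _ ≤ ‖Ttil (projCLM V v)‖ := norm_projCLM_le V _
          _ ≤ ‖Ttil‖ * ‖projCLM V v‖ := Ttil.le_opNorm _
      have : ‖projCLM V v‖ = 0 := by nlinarith [norm_nonneg (projCLM V v)]
      exact norm_eq_zero.mp this
    have hAv : mulE A v = 0 := by
      have : v - projCLM V v = v := by rw [hPV, sub_zero]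
      have hmem : v ∈ Vᗮ := by
        rw [← this]; exact sub_projCLM_mem_orthogonal V v
      rw [hVperp] at hmem
      exact hmem
    have hu0 : u = 0 := by rw [← hv', hAv]
    have : mulE A y - mulE A Δ = Pb := by
      have h' := hu0
      rw [hu] at h'
      exact sub_eq_zero.mp h'
    rw [lss_iff]
    rw [map_sub]
    exact this
  · -- LSS + Δ ⊆ fixed points
    rintro ⟨x, hx, rfl⟩
    have hAx : mulE A x = Pb := (lss_iff x).mp hx
    have key : mulE R (mulE A (x + Δ)) = mulE R b := by
      calc mulE R (mulE A (x + Δ)) = mulE R (mulE A x) + mulE R (mulE A Δ) := by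
            rw [map_add, map_add]
        _ = mulE R Pb + w := by rw [hAx, hRAΔ]
        _ = mulE R (Pb + PNb) := by rw [map_add, hw]
        _ = mulE R b := by rw [hbsplit]
    have := hTR (x + Δ)
    rw [key] at this
    exact this
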